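/- For all b₁, b₂, ξ ∈ ℤ_2, the matrix [[2 + 8b₁, 1 + 8ξ],[1 + 8ξ, 2 + 8b₂]] is congruent under GL_2(ℤ_2) to [[2, 1],[1, 2]]. -/

import Mathlib

open Matrix MeasureTheory

/-- Congruence of square matrices over `R`: `B = U * A * Uᵀ` for some `U ∈ GL`. -/
def Matrix.Congruent {R : Type*} [CommRing R] {ι : Type*} [Fintype ι] [DecidableEq ι]
    (A B : Matrix ι ι R) : Prop :=
  ∃ U : (Matrix ι ι R)ˣ, (U : Matrix ι ι R) * A * (U : Matrix ι ι R)ᵀ = B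

/-- Congruence of square matrices indexed by two (necessarily equipotent) index types. -/
def Matrix.CongruentTo {R : Type*} [CommRing R] {ι κ : Type*} [Fintype ι] [DecidableEq ι]
    [Fintype κ] [DecidableEq κ] (A : Matrix ι ι R) (B : Matrix κ κ R) : Prop :=
  ∃ e : ι ≃ κ, (A.submatrix e.symm e.symm).Congruent B


private lemma norm_two2 : ‖(2 : ℤ_[2])‖ = 1/2 := by
  have h := @PadicInt.norm_p 2 ⟨Nat.prime_two⟩
  norm_num at h
  simpa using h

private lemma odd_norm (z : ℤ_[2]) : ‖1 + 2*z‖ = 1 := by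
  rcases lt_or_eq_of_le (PadicInt.norm_le_one (1 + 2*z)) with h | h
  · rw [PadicInt.norm_lt_one_iff_dvd] at h
    exfalso
    have h2 : ((2:ℕ) : ℤ_[2]) ∣ 2 * z := ⟨z, by push_cast; ring⟩
    have h1 : ((2:ℕ) : ℤ_[2]) ∣ 1 := (dvd_add_right h2).mp (by rwa [add_comm] at h)
    have hu : IsUnit ((2:ℕ) : ℤ_[2]) := isUnit_of_dvd_one h1
    rw [PadicInt.isUnit_iff] at hu
    have : ‖(2:ℤ_[2])‖ = 1 := by simpa using hu
    rw [norm_two2] at this; norm_num at this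
  · exact h

private lemma norm8 (x : ℤ_[2]) : ‖8 * x‖ ≤ 1/8 := by
  have h8 : ‖(8:ℤ_[2])‖ = 1/8 := by
    rw [show (8:ℤ_[2]) = 2*(2*2) by norm_num, norm_mul, norm_mul, norm_two2]
    norm_num
  rw [norm_mul, h8]
  have := PadicInt.norm_le_one x
  linarith

private lemma quad_root (q r s : ℤ_[2]) (hr : ‖r‖ = 1/2) (hs : ‖s‖ ≤ 1/8) :
    ∃ z : ℤ_[2], q * z^2 + r * z + s = 0 := by
  have := Fact.mk Nat.prime_two
  obtain ⟨z, hz, -⟩ := hensels_lemma (p := 2)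
    (F := Polynomial.C q * Polynomial.X^2 + Polynomial.C r * Polynomial.X + Polynomial.C s)
    (a := (0 : ℤ_[2]))
    (by simp [Polynomial.derivative_C_mul, hr]
        norm_num
        linarith)
  refine ⟨z, ?_⟩
  simpa only [Polynomial.coe_aeval_eq_eval, Polynomial.eval_add, Polynomial.eval_mul, Polynomial.eval_pow,
    Polynomial.eval_C, Polynomial.eval_X] using hz

theorem stmt_11 (b₁ b₂ ξ : ℤ_[2]) :
    (!![2 + 8 * b₁, 1 + 8 * ξ; 1 + 8 * ξ, 2 + 8 * b₂] : Matrix (Fin 2) (Fin 2) ℤ_[2]).Congruent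
      !![2, 1; 1, 2] := by
  -- step 1: find t
  obtain ⟨t, ht⟩ := quad_root (2 + 8*b₂) (2*(1 + 8*ξ)) (8*b₁)
    (by rw [norm_mul, norm_two2, show (1 + 8*ξ : ℤ_[2]) = 1 + 2*(4*ξ) by ring,
          odd_norm]; norm_num)
    (norm8 b₁)
  set B : ℤ_[2] := 1 + 8*ξ + t*(2 + 8*b₂) with hB
  have hBodd : B = 1 + 2*(4*ξ + t*(1 + 4*b₂)) := by rw [hB]; ring
  -- step 2: find s
  obtain ⟨s, hs⟩ := quad_root (-6) (-6*B) ((2 + 8*b₂) - 2*B^2)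
    (by rw [show (-6*B : ℤ_[2]) = -(2*(3*B)) by ring, norm_neg, norm_mul, norm_two2,
          norm_mul, show (3:ℤ_[2]) = 1 + 2*1 by norm_num, odd_norm, hBodd, odd_norm]
        norm_num)
    (by rw [show ((2 + 8*b₂) - 2*B^2 : ℤ_[2])
          = 8*(b₂ - (4*ξ + t*(1 + 4*b₂)) - (4*ξ + t*(1 + 4*b₂))^2) by rw [hBodd]; ring]
        exact norm8 _)
  -- step 3: invert B + 2s
  have hunit : IsUnit (B + 2*s) := by
    rw [PadicInt.isUnit_iff, show (B + 2*s : ℤ_[2]) = 1 + 2*((4*ξ + t*(1 + 4*b₂)) + s) by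
      rw [hBodd]; ring, odd_norm]
  obtain ⟨u, hu⟩ := hunit.exists_left_inv
  -- the transition matrix
  set U : Matrix (Fin 2) (Fin 2) ℤ_[2] := !![1, t; u*s, u*s*t + u] with hU
  have hdet : U.det = u := by rw [hU, Matrix.det_fin_two_of]; ring
  have hUunit : IsUnit U := by
    rw [Matrix.isUnit_iff_isUnit_det, hdet]
    exact IsUnit.of_mul_eq_one _ hu
  refine ⟨hUunit.unit, ?_⟩
  rw [IsUnit.unit_spec, hU]
  ext i j
  fin_cases i <;> fin_cases j <;>
    simp [Matrix.mul_apply, Fin.sum_univ_two, Matrix.transpose_apply, Matrix.vecHead, Matrix.vecTail]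
  · linear_combination ht
  · linear_combination u*s*ht + hu
  · linear_combination u*s*ht + hu
  · linear_combination u^2*hs + (2*(u*(B+2*s)+1))*hu + u^2*s^2*ht
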